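/- The number of ternary necklaces of length n with even weight (sum of entries even) equals N_e(n) = (1/n) Σ_{cd = n} φ(c) [3^d − odd(c)·(3^d − 1)/2], where odd(c) = 1 if c is odd and 0 if c is even. -/

import Mathlib

/-- The setoid on length-`n` strings identifying strings that differ by a cyclic rotation. -/
def rotSetoid (n : ℕ) (α : Type*) : Setoid (ZMod n → α) where
  r f g := ∃ k : ZMod n, ∀ i, g i = f (i + k)
  iseqv := ⟨fun f => ⟨0, fun i => by rw [add_zero]⟩,
    fun {f g} ⟨k, h⟩ => ⟨-k, fun i => by rw [h (i + -k), neg_add_cancel_right]⟩,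
    fun {f g h} ⟨k, hk⟩ ⟨k', hk'⟩ => ⟨k' + k, fun i => by
      rw [hk' i, hk (i + k'), add_assoc]⟩⟩

open Finset

lemma two_mul_card_even_sum (ι : Type*) [Fintype ι] [DecidableEq ι] :
    2 * (Finset.univ.filter (fun F : ι → Fin 3 => Even (∑ i, (F i).val))).card
      = 3 ^ (Fintype.card ι) + 1 := by
  classical
  have key : ∑ F : ι → Fin 3, (-1 : ℤ) ^ (∑ i, (F i).val) = 1 := by
    have h := Finset.prod_univ_sum (fun _ : ι => (Finset.univ : Finset (Fin 3)))
      (fun _ a => (-1 : ℤ) ^ (a.val))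
    rw [Fintype.piFinset_univ] at h
    calc ∑ F : ι → Fin 3, (-1 : ℤ) ^ (∑ i, (F i).val)
        = ∑ F : ι → Fin 3, ∏ i, (-1 : ℤ) ^ ((F i).val) := by
          refine Finset.sum_congr rfl fun F _ => ?_
          rw [Finset.prod_pow_eq_pow_sum]
      _ = ∏ i : ι, ∑ a : Fin 3, (-1 : ℤ) ^ (a.val) := h.symm
      _ = 1 := by
          rw [Finset.prod_congr rfl (fun i _ => show ∑ a : Fin 3, (-1 : ℤ) ^ (a.val) = 1 by decide),
            Finset.prod_const, one_pow]
  set p : (ι → Fin 3) → Prop := fun F => Even (∑ i, (F i).val) with hp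
  have split := Finset.sum_filter_add_sum_filter_not Finset.univ p
    (fun F => (-1 : ℤ) ^ (∑ i, (F i).val))
  have he : ∑ F ∈ Finset.univ.filter p, (-1 : ℤ) ^ (∑ i, (F i).val)
      = (Finset.univ.filter p).card := by
    rw [Finset.sum_congr rfl (fun F hF => (Finset.mem_filter.mp hF).2.neg_one_pow)]
    simp
  have ho : ∑ F ∈ Finset.univ.filter (fun F => ¬ p F), (-1 : ℤ) ^ (∑ i, (F i).val)
      = -((Finset.univ.filter (fun F => ¬ p F)).card : ℤ) := by
    have : ∀ F ∈ Finset.univ.filter (fun F => ¬ p F),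
        (-1 : ℤ) ^ (∑ i, (F i).val) = -1 := fun F hF =>
      (Nat.not_even_iff_odd.mp (Finset.mem_filter.mp hF).2).neg_one_pow
    rw [Finset.sum_congr rfl this, Finset.sum_const]
    simp
  have hcards : (Finset.univ.filter p).card + (Finset.univ.filter (fun F => ¬ p F)).card
      = 3 ^ (Fintype.card ι) := by
    rw [Finset.card_filter_add_card_filter_not]
    simp [Fintype.card_fun]
  rw [he, ho, key] at split
  have hc' : ((Finset.univ.filter p).card : ℤ) + ((Finset.univ.filter (fun F => ¬ p F)).card : ℤ)
      = 3 ^ (Fintype.card ι) := by exact_mod_cast hcards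
  zify
  linarith

abbrev EvenStr (n : ℕ) [NeZero n] : Type := {f : ZMod n → Fin 3 // Even (∑ i, (f i).val)}

lemma weight_shift (n : ℕ) [NeZero n] (k : ZMod n) (f : ZMod n → Fin 3) :
    ∑ i, (f (i + k)).val = ∑ i, (f i).val :=
  Fintype.sum_equiv (Equiv.addRight k) _ _ (fun _ => rfl)

instance rotAction (n : ℕ) [NeZero n] : AddAction (ZMod n) (EvenStr n) where
  vadd k f := ⟨fun i => f.1 (i + k), by
    simpa [weight_shift n k f.1] using f.2⟩
  zero_vadd f := Subtype.ext (funext fun i => by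
    show f.1 (i + 0) = f.1 i
    rw [add_zero])
  add_vadd k k' f := Subtype.ext (funext fun i => by
    show f.1 (i + (k + k')) = f.1 (i + k + k')
    rw [add_assoc])

lemma rot_vadd_apply (n : ℕ) [NeZero n] (k : ZMod n) (f : EvenStr n) (i : ZMod n) :
    (k +ᵥ f).1 i = f.1 (i + k) := rfl

lemma setoid_eq (n : ℕ) [NeZero n] :
    (rotSetoid n (Fin 3)).comap (Subtype.val : EvenStr n → (ZMod n → Fin 3))
      = AddAction.orbitRel (ZMod n) (EvenStr n) := by
  ext x y
  show (∃ k : ZMod n, ∀ i, (y.1 : ZMod n → Fin 3) i = x.1 (i + k)) ↔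
    x ∈ AddAction.orbit (ZMod n) y
  constructor
  · rintro ⟨k, h⟩
    refine ⟨-k, Subtype.ext (funext fun i => ?_)⟩
    rw [rot_vadd_apply, h (i + -k), neg_add_cancel_right]
  · rintro ⟨k, h⟩
    refine ⟨-k, fun i => ?_⟩
    rw [← h, rot_vadd_apply, neg_add_cancel_right]

section helpers
variable {n : ℕ} [NeZero n]

lemma shift_mul {f : ZMod n → Fin 3} {k : ZMod n}
    (h : ∀ i, f (i + k) = f i) (x i : ZMod n) : f (i + x * k) = f i := by
  have hnat : ∀ m : ℕ, ∀ i, f (i + (m : ZMod n) * k) = f i := by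
    intro m
    induction m with
    | zero => intro i; simp
    | succ m ih =>
        intro i
        push_cast
        rw [add_mul, one_mul, ← add_assoc, h, ih]
  have hx : ((x.val : ℕ) : ZMod n) = x := ZMod.natCast_rightInverse x
  rw [← hx]
  exact hnat x.val i

lemma shift_gcd {f : ZMod n → Fin 3} {k : ZMod n}
    (h : ∀ i, f (i + k) = f i) (x i : ZMod n) :
    f (i + x * (Nat.gcd n k.val : ZMod n)) = f i := by
  have hb : ((Nat.gcd n k.val : ℕ) : ZMod n) = (Nat.gcdB n k.val : ZMod n) * k := by
    have hbez := Nat.gcd_eq_gcd_ab n k.val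
    have : ((Nat.gcd n k.val : ℤ) : ZMod n) = ((n * Nat.gcdA n k.val + k.val * Nat.gcdB n k.val : ℤ) : ZMod n) := by
      rw [← hbez]
    push_cast at this
    rw [ZMod.natCast_self, ZMod.natCast_rightInverse k] at this
    rw [this]
    ring
  rw [hb, ← mul_assoc]
  exact shift_mul h _ i

lemma natCast_fin_bijective (m : ℕ) [NeZero m] :
    Function.Bijective (fun b : Fin m => ((b.val : ℕ) : ZMod m)) := by
  rw [Fintype.bijective_iff_injective_and_card]
  refine ⟨fun a b hab => Fin.ext ?_, by simp [ZMod.card]⟩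
  have := congrArg ZMod.val hab
  simpa [ZMod.val_natCast, Nat.mod_eq_of_lt a.2, Nat.mod_eq_of_lt b.2] using this

end helpers

section sumpi
variable {n d : ℕ} [NeZero n] [NeZero d]

lemma sum_pi (hdn : d ∣ n) (F : ZMod d → Fin 3) :
    ∑ i : ZMod n, (F ((i.val : ZMod d))).val = (n / d) * ∑ j : ZMod d, (F j).val := by
  have dpos : 0 < d := Nat.pos_of_ne_zero (NeZero.ne d)
  have hmul : d * (n / d) = n := Nat.mul_div_cancel' hdn
  have hlt : ∀ (a : Fin (n/d)) (b : Fin d), b.val + d * a.val < n := by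
    intro a b
    have h1 : d * (a.val + 1) ≤ d * (n / d) := Nat.mul_le_mul_left d a.2
    rw [hmul] at h1
    have := b.2
    nlinarith [Nat.mul_le_mul_left d a.2]
  have hval : ∀ (a : Fin (n/d)) (b : Fin d),
      (((b.val + d * a.val : ℕ) : ZMod n)).val = b.val + d * a.val := by
    intro a b
    rw [ZMod.val_natCast, Nat.mod_eq_of_lt (hlt a b)]
  have hbij : Function.Bijective
      (fun p : Fin (n/d) × Fin d => ((p.2.val + d * p.1.val : ℕ) : ZMod n)) := by
    rw [Fintype.bijective_iff_injective_and_card]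
    constructor
    · rintro ⟨a, b⟩ ⟨a', b'⟩ hab
      have h2 := congrArg ZMod.val hab
      simp only at h2
      rw [hval a b, hval a' b'] at h2
      have hb : b.val = b'.val := by
        have e1 : (b.val + d * a.val) % d = b.val := by
          rw [Nat.add_mul_mod_self_left, Nat.mod_eq_of_lt b.2]
        have e2 : (b'.val + d * a'.val) % d = b'.val := by
          rw [Nat.add_mul_mod_self_left, Nat.mod_eq_of_lt b'.2]
        rw [← e1, ← e2, h2]
      have ha : a.val = a'.val := by
        have e1 : (b.val + d * a.val) / d = a.val := by
          rw [Nat.add_mul_div_left _ _ dpos, Nat.div_eq_of_lt b.2, Nat.zero_add]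
        have e2 : (b'.val + d * a'.val) / d = a'.val := by
          rw [Nat.add_mul_div_left _ _ dpos, Nat.div_eq_of_lt b'.2, Nat.zero_add]
        rw [← e1, ← e2, h2]
      exact Prod.ext (Fin.ext ha) (Fin.ext hb)
    · simp [ZMod.card, Nat.div_mul_cancel hdn]
  have hsum := Fintype.sum_bijective _ hbij
    (fun p : Fin (n/d) × Fin d => (F (((((p.2.val + d * p.1.val : ℕ) : ZMod n)).val : ZMod d))).val)
    (fun i : ZMod n => (F ((i.val : ZMod d))).val) (fun p => rfl)
  rw [← hsum]
  have hterm : ∀ (p : Fin (n/d) × Fin d),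
      (F (((((p.2.val + d * p.1.val : ℕ) : ZMod n)).val : ZMod d))).val
        = (F ((p.2.val : ZMod d))).val := by
    rintro ⟨a, b⟩
    simp only
    rw [hval a b]
    congr 2
    push_cast
    rw [ZMod.natCast_self]
    ring
  rw [Finset.sum_congr rfl (fun p _ => hterm p), Fintype.sum_prod_type]
  have hinner : ∀ a : Fin (n/d), ∑ b : Fin d, (F ((b.val : ZMod d))).val
      = ∑ j : ZMod d, (F j).val :=
    fun a => Fintype.sum_bijective _ (natCast_fin_bijective d)
      (fun b : Fin d => (F ((b.val : ZMod d))).val) (fun j => (F j).val) (fun b => rfl)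
  rw [Finset.sum_congr rfl (fun a _ => hinner a), Finset.sum_const]
  simp [mul_comm]

end sumpi

lemma card_fixedBy_eq (n d : ℕ) [NeZero n] [NeZero d] (k : ZMod n)
    (hd : Nat.gcd n k.val = d) :
    Nat.card (AddAction.fixedBy (EvenStr n) k)
      = Nat.card {F : ZMod d → Fin 3 // Even ((n / d) * ∑ j, (F j).val)} := by
  have hdn : d ∣ n := hd ▸ Nat.gcd_dvd_left n k.val
  have hdk : d ∣ k.val := hd ▸ Nat.gcd_dvd_right n k.val
  have dpos : 0 < d := Nat.pos_of_ne_zero (NeZero.ne d)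
  have dn : d ≤ n := Nat.le_of_dvd (Nat.pos_of_ne_zero (NeZero.ne n)) hdn
  set π : ZMod n → ZMod d := fun i => ((i.val : ℕ) : ZMod d) with hπ
  have πadd : ∀ i j : ZMod n, π (i + j) = π i + π j := by
    intro i j
    show (((i + j).val : ℕ) : ZMod d) = ((i.val : ℕ) : ZMod d) + ((j.val : ℕ) : ZMod d)
    rw [ZMod.val_add]
    have hm : ((i.val + j.val) % n : ℕ) + n * ((i.val + j.val) / n) = i.val + j.val :=
      Nat.mod_add_div _ _
    have hcast := congrArg (fun t : ℕ => (t : ZMod d)) hm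
    push_cast at hcast
    rw [(ZMod.natCast_eq_zero_iff n d).mpr hdn] at hcast
    simpa using hcast
  have πk : π k = 0 := (ZMod.natCast_eq_zero_iff k.val d).mpr hdk
  set ι : ZMod d → ZMod n := fun j => ((j.val : ℕ) : ZMod n) with hι
  have πι : ∀ j : ZMod d, π (ι j) = j := by
    intro j
    show ((((j.val : ℕ) : ZMod n)).val : ZMod d) = j
    rw [ZMod.val_natCast, Nat.mod_eq_of_lt (lt_of_lt_of_le j.val_lt dn)]
    exact ZMod.natCast_rightInverse j
  -- invariance lemma for fixed functions
  have inv_lemma : ∀ (f : ZMod n → Fin 3), (∀ i, f (i + k) = f i) → ∀ i, f i = f (ι (π i)) := by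
    intro f hf i
    have key : i = ι (π i) + ((i.val / d : ℕ) : ZMod n) * ((Nat.gcd n k.val : ℕ) : ZMod n) := by
      rw [hd]
      have h1 : i.val % d + d * (i.val / d) = i.val := Nat.mod_add_div _ _
      have h2 : ι (π i) = ((i.val % d : ℕ) : ZMod n) := by
        show (((((i.val : ℕ) : ZMod d)).val : ℕ) : ZMod n) = _
        rw [ZMod.val_natCast]
      rw [h2]
      have h3 := congrArg (fun t : ℕ => (t : ZMod n)) h1
      push_cast at h3
      rw [ZMod.natCast_rightInverse i] at h3
      linear_combination -h3
    conv_lhs => rw [key]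
    exact shift_gcd hf _ _
  -- the bijection
  set T := {F : ZMod d → Fin 3 // Even ((n / d) * ∑ j, (F j).val)} with hT
  have sumπ : ∀ F : ZMod d → Fin 3,
      ∑ i : ZMod n, (F (π i)).val = (n / d) * ∑ j : ZMod d, (F j).val := fun F => sum_pi hdn F
  set Ψ : T → (AddAction.fixedBy (EvenStr n) k) := fun F =>
    ⟨⟨fun i => F.1 (π i), by rw [sumπ F.1]; exact F.2⟩, by
      refine Subtype.ext (funext fun i => ?_)
      show F.1 (π (i + k)) = F.1 (π i)
      rw [πadd, πk, add_zero]⟩ with hΨ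
  have hbijΨ : Function.Bijective Ψ := by
    constructor
    · intro F F' hFF
      have h1 : ∀ i, F.1 (π i) = F'.1 (π i) := fun i =>
        congrFun (congrArg (fun x : (AddAction.fixedBy (EvenStr n) k) => x.1.1) hFF) i
      refine Subtype.ext (funext fun j => ?_)
      have h2 := h1 (ι j)
      rw [πι j] at h2
      exact h2
    · rintro ⟨⟨f, hev⟩, hfix⟩
      have hf : ∀ i, f (i + k) = f i := by
        intro i
        have := congrArg Subtype.val hfix
        exact congrFun this i
      have hfeq : ∀ i, f i = f (ι (π i)) := inv_lemma f hf
      have hFev : Even ((n / d) * ∑ j : ZMod d, ((fun j => f (ι j)) j).val) := by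
        rw [← sumπ]
        have : ∀ i : ZMod n, ((fun j => f (ι j)) (π i)).val = (f i).val := fun i => by
          simp only []
          rw [← hfeq i]
        rw [Finset.sum_congr rfl (fun i _ => this i)]
        exact hev
      refine ⟨⟨fun j => f (ι j), hFev⟩, ?_⟩
      refine Subtype.ext (Subtype.ext (funext fun i => ?_))
      exact (hfeq i).symm
  exact (Nat.card_congr (Equiv.ofBijective Ψ hbijΨ)).symm

lemma card_T_even (c d : ℕ) [NeZero d] (hc : ¬ Odd c) :
    Nat.card {F : ZMod d → Fin 3 // Even (c * ∑ j, (F j).val)} = 3 ^ d := by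
  classical
  have hce : Even c := Nat.not_odd_iff_even.mp hc
  have htriv : ∀ F : ZMod d → Fin 3, Even (c * ∑ j, (F j).val) := fun F => hce.mul_right _
  rw [Nat.card_congr (Equiv.subtypeUnivEquiv htriv)]
  simp [Nat.card_eq_fintype_card, ZMod.card]

lemma card_T_odd (c d : ℕ) [NeZero d] (hc : Odd c) :
    2 * Nat.card {F : ZMod d → Fin 3 // Even (c * ∑ j, (F j).val)} = 3 ^ d + 1 := by
  classical
  have hiff : ∀ F : ZMod d → Fin 3,
      (Even (c * ∑ j, (F j).val)) ↔ Even (∑ j, (F j).val) := by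
    intro F
    rw [Nat.even_mul]
    exact or_iff_right (Nat.not_even_iff_odd.mpr hc)
  rw [Nat.card_congr (Equiv.subtypeEquivRight hiff), Nat.card_eq_fintype_card,
    Fintype.card_subtype]
  have := two_mul_card_even_sum (ZMod d)
  rwa [ZMod.card] at this

/-- The number of ternary necklaces of length `n` with even weight equals
`N_e(n) = (1/n) ∑_{cd = n} φ(c) [3^d − odd(c)·(3^d − 1)/2]`. -/
theorem even_ternary_necklace_count (n : ℕ) [NeZero n] :
    (Nat.card (Quotient ((rotSetoid n (Fin 3)).comap
        (Subtype.val : {f : ZMod n → Fin 3 // Even (∑ i, (f i).val)} →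
          (ZMod n → Fin 3)))) : ℚ) =
      (1 / (n : ℚ)) * ∑ c ∈ n.divisors, (Nat.totient c : ℚ) *
        (3 ^ (n / c) - (if Odd c then 1 else 0) * (3 ^ (n / c) - 1) / 2) := by
  classical
  have hn0 : n ≠ 0 := NeZero.ne n
  have hnQ : (n : ℚ) ≠ 0 := Nat.cast_ne_zero.mpr hn0
  rw [setoid_eq n]
  haveI : ∀ a : ZMod n, Fintype (AddAction.fixedBy (EvenStr n) a) :=
    fun a => Fintype.ofFinite _
  haveI : Fintype (Quotient (AddAction.orbitRel (ZMod n) (EvenStr n))) := Fintype.ofFinite _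
  have burn := AddAction.sum_card_fixedBy_eq_card_orbits_mul_card_addGroup
    (ZMod n) (EvenStr n)
  rw [ZMod.card] at burn
  set h : ℕ → ℚ := fun c =>
    3 ^ (n / c) - (if Odd c then 1 else 0) * (3 ^ (n / c) - 1) / 2 with hh
  -- per-k evaluation
  have perk : ∀ k : ZMod n,
      (Fintype.card (AddAction.fixedBy (EvenStr n) k) : ℚ) = h (addOrderOf k) := by
    intro k
    set d := Nat.gcd n k.val with hdd
    haveI : NeZero d := ⟨Nat.gcd_ne_zero_left hn0⟩
    have hdn : d ∣ n := Nat.gcd_dvd_left n k.val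
    have hc : addOrderOf k = n / d := by
      conv_lhs => rw [← ZMod.natCast_rightInverse k]
      exact ZMod.addOrderOf_coe k.val hn0
    have hnc : n / (addOrderOf k) = d := by
      rw [hc]
      exact Nat.div_div_self hdn hn0
    have hcard := card_fixedBy_eq n d k rfl
    rw [← Nat.card_eq_fintype_card, hcard]
    by_cases hodd : Odd (addOrderOf k)
    · rw [hc] at hodd
      have h2 := card_T_odd (n / d) d hodd
      have : (Nat.card {F : ZMod d → Fin 3 // Even ((n/d) * ∑ j, (F j).val)} : ℚ)
          = (3 ^ d + 1) / 2 := by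
        rw [eq_div_iff (by norm_num : (2:ℚ) ≠ 0)]
        rw [mul_comm]
        exact_mod_cast congrArg (fun t : ℕ => (t : ℚ)) h2
      rw [this, hh]
      simp only [if_pos (hc ▸ hodd), hnc]
      ring
    · rw [hc] at hodd
      have h2 := card_T_even (n / d) d hodd
      rw [h2, hh]
      simp only [if_neg (hc ▸ hodd), hnc]
      push_cast
      ring
  -- fiberwise sum
  have hfib := Finset.sum_fiberwise_eq_sum_filter Finset.univ n.divisors
    (fun k : ZMod n => addOrderOf k) (fun k : ZMod n => h (addOrderOf k))
  have hfilt : Finset.univ.filter (fun k : ZMod n => addOrderOf k ∈ n.divisors)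
      = Finset.univ := by
    refine Finset.filter_true_of_mem (fun k _ => ?_)
    rw [Nat.mem_divisors]
    refine ⟨?_, hn0⟩
    have := addOrderOf_dvd_card (x := k)
    rwa [ZMod.card] at this
  rw [hfilt] at hfib
  have hinner : ∀ c ∈ n.divisors,
      ∑ k ∈ Finset.univ.filter (fun k : ZMod n => addOrderOf k = c),
        h (addOrderOf k) = (Nat.totient c : ℚ) * h c := by
    intro c hcmem
    have hdvd : c ∣ Fintype.card (ZMod n) := by
      rw [ZMod.card]; exact (Nat.mem_divisors.mp hcmem).1
    rw [Finset.sum_congr rfl (fun k hk => by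
      rw [(Finset.mem_filter.mp hk).2]), Finset.sum_const,
      IsAddCyclic.card_addOrderOf_eq_totient hdvd, nsmul_eq_mul]
  rw [Finset.sum_congr rfl hinner] at hfib
  -- assemble
  rw [one_div, inv_mul_eq_div, eq_div_iff hnQ]
  have goal2 : ((Nat.card (Quotient (AddAction.orbitRel (ZMod n) (EvenStr n)))) : ℚ) * n
      = ∑ k : ZMod n, h (addOrderOf k) := by
    rw [Nat.card_eq_fintype_card]
    rw [← Finset.sum_congr rfl (fun (k : ZMod n) (_ : k ∈ Finset.univ) => (perk k))]
    exact_mod_cast (congrArg (fun t : ℕ => (t : ℚ)) burn).symm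
  rw [goal2, ← hfib]
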